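/- The sum over all a,b,c,d ∈ ℤ_{≥0} with a ≥ 1, ad − bc = 1 of 1/(16(a+c)²(b+d)²(a+b+c+d)²) converges and equals 1/48. -/

import Mathlib

namespace SBP
abbrev Q := ℕ × ℕ × ℕ × ℕ
def stepL (q : Q) : Q := (q.1 + q.2.1, q.2.1, q.2.2.1 + q.2.2.2, q.2.2.2)
def stepR (q : Q) : Q := (q.1, q.1 + q.2.1, q.2.2.1, q.2.2.1 + q.2.2.2)
def P (q : Q) : Prop := 1 ≤ q.1 ∧ q.1 * q.2.2.2 = q.2.1 * q.2.2.1 + 1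




def M : List Bool → Q
  | [] => (1, 0, 0, 1)
  | true :: w => stepL (M w)
  | false :: w => stepR (M w)


lemma P_stepL {q : Q} (h : P q) : P (stepL q) := by
  obtain ⟨a, b, c, d⟩ := q
  obtain ⟨h1, h2⟩ := h
  refine ⟨by simp [stepL]; omega, ?_⟩
  show (a + b) * d = b * (c + d) + 1
  have e1 : (a + b) * d = a * d + b * d := by ring
  have e2 : b * (c + d) = b * c + b * d := by ring
  rw [e1, e2, h2]; ring

lemma P_stepR {q : Q} (h : P q) : P (stepR q) := by
  obtain ⟨a, b, c, d⟩ := q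
  obtain ⟨h1, h2⟩ := h
  refine ⟨h1, ?_⟩
  show a * (c + d) = (a + b) * c + 1
  have e1 : a * (c + d) = a * c + a * d := by ring
  have e2 : (a + b) * c = a * c + b * c := by ring
  rw [e1, e2, h2]; ring

lemma P_M (w : List Bool) : P (M w) := by
  induction w with
  | nil => exact ⟨le_refl _, by simp [M]⟩
  | cons x w ih => cases x <;> simp only [M] <;> [exact P_stepR ih; exact P_stepL ih]

lemma P.d_pos {q : Q} (h : P q) : 1 ≤ q.2.2.2 := by
  obtain ⟨a, b, c, d⟩ := q
  obtain ⟨h1, h2⟩ := h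
  rcases Nat.eq_zero_or_pos d with hd | hd
  · subst hd; simp at h2
  · exact hd


def uu (q : Q) : ℕ := q.1 + q.2.2.1
def vv (q : Q) : ℕ := q.2.1 + q.2.2.2

lemma uu_stepL (q : Q) : uu (stepL q) = uu q + vv q := by simp [stepL, uu, vv]; omega
lemma vv_stepL (q : Q) : vv (stepL q) = vv q := by simp [stepL, uu, vv]
lemma uu_stepR (q : Q) : uu (stepR q) = uu q := by simp [stepR, uu, vv]
lemma vv_stepR (q : Q) : vv (stepR q) = uu q + vv q := by simp [stepR, uu, vv]; omega

lemma real_h (x y : ℝ) (hx : 0 < x) (hy : 0 < y) :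
    1 / ((x + y) * y) + 1 / (x * (x + y)) = 1 / (x * y) := by
  have hxy : 0 < x + y := by linarith
  field_simp

lemma real_f (x y : ℝ) (hx : 0 < x) (hy : 0 < y) :
    1 / (16 * x ^ 2 * y ^ 2 * (x + y) ^ 2) =
      (1 / 48) * (1 / (x ^ 3 * y ^ 3) - 1 / ((x + y) ^ 3 * y ^ 3) - 1 / (x ^ 3 * (x + y) ^ 3)) := by
  have hxy : 0 < x + y := by linarith
  field_simp
  ring

def S : ℕ → Finset (List Bool)
  | 0 => {[]}
  | n + 1 => (S n).image (true :: ·) ∪ (S n).image (false :: ·)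

lemma mem_S {n : ℕ} {w : List Bool} : w ∈ S n ↔ w.length = n := by
  induction n generalizing w with
  | zero => cases w <;> simp [S]
  | succ n ih =>
    cases w with
    | nil => simp [S]
    | cons x w =>
      cases x <;> simp [S, ih]

lemma sum_S_succ (n : ℕ) (F : List Bool → ℝ) :
    ∑ w ∈ S (n + 1), F w = ∑ w ∈ S n, (F (true :: w) + F (false :: w)) := by
  have hdisj : Disjoint ((S n).image (true :: ·)) ((S n).image (false :: ·)) := by
    rw [Finset.disjoint_left]
    intro w hw hw'
    simp only [Finset.mem_image] at hw hw'
    obtain ⟨a, _, ha⟩ := hw; obtain ⟨b, _, hb⟩ := hw'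
    rw [← ha] at hb; simp at hb
  rw [show S (n+1) = (S n).image (true :: ·) ∪ (S n).image (false :: ·) from rfl,
    Finset.sum_union hdisj, Finset.sum_image (by intro a _ b _ h; simpa using h),
    Finset.sum_image (by intro a _ b _ h; simpa using h), ← Finset.sum_add_distrib]

def T : ℕ → Finset (List Bool)
  | 0 => ∅
  | n + 1 => T n ∪ S n

lemma mem_T {n : ℕ} {w : List Bool} : w ∈ T n ↔ w.length < n := by
  induction n with
  | zero => simp [T]
  | succ n ih => simp [T, ih, mem_S]; omega

lemma sum_T_succ (n : ℕ) (F : List Bool → ℝ) :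
    ∑ w ∈ T (n + 1), F w = ∑ w ∈ T n, F w + ∑ w ∈ S n, F w := by
  rw [show T (n+1) = T n ∪ S n from rfl, Finset.sum_union]
  rw [Finset.disjoint_left]
  intro w hw hw'
  rw [mem_T] at hw; rw [mem_S] at hw'; omega


lemma uu_pos {q : Q} (h : P q) : 1 ≤ uu q := le_trans h.1 (Nat.le_add_right _ _)
lemma vv_pos {q : Q} (h : P q) : 1 ≤ vv q := le_trans h.d_pos (Nat.le_add_left _ _)

noncomputable def g (q : Q) : ℝ := 1 / ((uu q : ℝ) ^ 3 * (vv q : ℝ) ^ 3)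
noncomputable def hh (q : Q) : ℝ := 1 / ((uu q : ℝ) * (vv q : ℝ))
noncomputable def f (q : Q) : ℝ :=
  1 / (16 * (uu q : ℝ) ^ 2 * (vv q : ℝ) ^ 2 * ((uu q : ℝ) + (vv q : ℝ)) ^ 2)

lemma uv_real_pos {q : Q} (h : P q) : (0:ℝ) < uu q ∧ (0:ℝ) < vv q := by
  constructor <;> [exact_mod_cast Nat.lt_of_lt_of_le Nat.zero_lt_one (uu_pos h);
    exact_mod_cast Nat.lt_of_lt_of_le Nat.zero_lt_one (vv_pos h)]

lemma hh_split {q : Q} (h : P q) : hh (stepL q) + hh (stepR q) = hh q := by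
  obtain ⟨hx, hy⟩ := uv_real_pos h
  simp only [hh, uu_stepL, vv_stepL, uu_stepR, vv_stepR]
  push_cast
  exact real_h _ _ hx hy

lemma f_split {q : Q} (h : P q) : f q = (1/48) * (g q - g (stepL q) - g (stepR q)) := by
  obtain ⟨hx, hy⟩ := uv_real_pos h
  simp only [f, g, uu_stepL, vv_stepL, uu_stepR, vv_stepR]
  push_cast
  exact real_f _ _ hx hy

lemma M_cons_true (w : List Bool) : M (true :: w) = stepL (M w) := rfl
lemma M_cons_false (w : List Bool) : M (false :: w) = stepR (M w) := rfl

lemma hsum : ∀ n : ℕ, ∑ w ∈ S n, hh (M w) = 1 := by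
  intro n
  induction n with
  | zero =>
    show ∑ w ∈ ({[]} : Finset (List Bool)), hh (M w) = 1
    simp [hh, M, uu, vv]
  | succ n ih =>
    rw [sum_S_succ n (fun w => hh (M w))]
    calc ∑ w ∈ S n, (hh (M (true :: w)) + hh (M (false :: w)))
        = ∑ w ∈ S n, hh (M w) := by
          refine Finset.sum_congr rfl fun w _ => ?_
          rw [M_cons_true, M_cons_false]
          exact hh_split (P_M w)
      _ = 1 := ih

lemma depth : ∀ n : ℕ, ∀ w ∈ S n, n + 2 ≤ uu (M w) + vv (M w) := by
  intro n
  induction n with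
  | zero =>
    intro w hw
    rw [mem_S, List.length_eq_zero_iff] at hw
    subst hw
    simp [M, uu, vv]
  | succ n ih =>
    intro w hw
    rw [mem_S] at hw
    cases w with
    | nil => simp at hw
    | cons x w =>
      have hw' : w ∈ S n := by rw [mem_S]; simpa using hw
      have h1 := ih w hw'
      have h2 := uu_pos (P_M w)
      have h3 := vv_pos (P_M w)
      cases x
      · rw [M_cons_false, uu_stepR, vv_stepR]; omega
      · rw [M_cons_true, uu_stepL, vv_stepL]; omega

lemma uv_ge (n : ℕ) (w : List Bool) (hw : w ∈ S n) :
    ((n : ℝ) + 1) ≤ (uu (M w) : ℝ) * (vv (M w) : ℝ) := by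
  have h1 := depth n w hw
  have h2 := uu_pos (P_M w)
  have h3 := vv_pos (P_M w)
  have : n + 1 ≤ uu (M w) * vv (M w) := by
    obtain ⟨u', hu⟩ := Nat.exists_eq_add_of_le h2
    obtain ⟨v', hv⟩ := Nat.exists_eq_add_of_le h3
    rw [hu, hv] at h1 ⊢
    nlinarith
  exact_mod_cast this

lemma gsum_le (n : ℕ) : ∑ w ∈ S n, g (M w) ≤ 1 / ((n : ℝ) + 1) ^ 2 := by
  have key : ∀ w ∈ S n, g (M w) ≤ (1 / ((n : ℝ) + 1) ^ 2) * hh (M w) := by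
    intro w hw
    obtain ⟨hx, hy⟩ := uv_real_pos (P_M w)
    have huv := uv_ge n w hw
    have hn : (0:ℝ) < (n:ℝ) + 1 := by positivity
    rw [g, hh, show ((uu (M w) : ℝ) ^ 3 * (vv (M w) : ℝ) ^ 3)
        = ((uu (M w) : ℝ) * (vv (M w)))^2 * ((uu (M w) : ℝ) * (vv (M w))) by ring]
    rw [div_mul_div_comm, one_mul]
    apply one_div_le_one_div_of_le (by positivity)
    have h0 : (0:ℝ) < (uu (M w) : ℝ) * (vv (M w)) := mul_pos hx hy
    have h1 : ((n:ℝ) + 1) ^ 2 ≤ ((uu (M w) : ℝ) * (vv (M w))) ^ 2 := by nlinarith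
    nlinarith
  calc ∑ w ∈ S n, g (M w) ≤ ∑ w ∈ S n, (1 / ((n : ℝ) + 1) ^ 2) * hh (M w) :=
        Finset.sum_le_sum key
    _ = (1 / ((n : ℝ) + 1) ^ 2) * ∑ w ∈ S n, hh (M w) := by rw [Finset.mul_sum]
    _ = 1 / ((n : ℝ) + 1) ^ 2 := by rw [hsum n]; ring

lemma gsum_nonneg (n : ℕ) : 0 ≤ ∑ w ∈ S n, g (M w) :=
  Finset.sum_nonneg fun w _ => by unfold g; positivity

lemma telescope (n : ℕ) :
    ∑ w ∈ T n, f (M w) = 1 / 48 - (1 / 48) * ∑ w ∈ S n, g (M w) := by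
  induction n with
  | zero =>
    show ∑ w ∈ (∅ : Finset (List Bool)), f (M w)
        = 1 / 48 - (1 / 48) * ∑ w ∈ ({[]} : Finset (List Bool)), g (M w)
    simp [g, M, uu, vv]
  | succ n ih =>
    rw [sum_T_succ, ih, sum_S_succ n (fun w => g (M w))]
    have : ∑ w ∈ S n, f (M w)
        = (1/48) * ∑ w ∈ S n, (g (M w) - g (M (true :: w)) - g (M (false :: w))) := by
      rw [Finset.mul_sum]
      refine Finset.sum_congr rfl fun w _ => ?_
      rw [M_cons_true, M_cons_false]
      exact f_split (P_M w)
    rw [this, Finset.sum_sub_distrib, Finset.sum_sub_distrib, Finset.sum_add_distrib]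
    ring


lemma M_inj : ∀ w w' : List Bool, M w = M w' → w = w' := by
  intro w
  induction w with
  | nil =>
    intro w' hw
    cases w' with
    | nil => rfl
    | cons x w' =>
      exfalso
      have hP := P_M w'
      cases x
      · -- M [] = stepR (M w'), compare second components
        rw [M_cons_false] at hw
        have : (1:ℕ) ≤ (M w').1 := hP.1
        have h2 := congrArg (fun q : Q => q.2.1) hw
        simp [stepR, M] at h2
        omega
      · rw [M_cons_true] at hw
        have : (1:ℕ) ≤ (M w').2.2.2 := hP.d_pos
        have h2 := congrArg (fun q : Q => q.2.2.1) hw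
        simp [stepL, M] at h2
        omega
  | cons x w ih =>
    intro w' hw
    cases w' with
    | nil =>
      exfalso
      have hP := P_M w
      cases x
      · rw [M_cons_false] at hw
        have : (1:ℕ) ≤ (M w).1 := hP.1
        have h2 := congrArg (fun q : Q => q.2.1) hw
        simp [stepR, M] at h2
        omega
      · rw [M_cons_true] at hw
        have : (1:ℕ) ≤ (M w).2.2.2 := hP.d_pos
        have h2 := congrArg (fun q : Q => q.2.2.1) hw
        simp [stepL, M] at h2
        omega
    | cons y w' =>
      have hPw := P_M w
      have hPw' := P_M w'
      cases x <;> cases y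
      · -- both false : stepR injective
        rw [M_cons_false, M_cons_false] at hw
        have : M w = M w' := by
          have e1 := congrArg (fun q : Q => q.1) hw
          have e2 := congrArg (fun q : Q => q.2.1) hw
          have e3 := congrArg (fun q : Q => q.2.2.1) hw
          have e4 := congrArg (fun q : Q => q.2.2.2) hw
          simp [stepR] at e1 e2 e3 e4
          exact Prod.ext (by omega) (Prod.ext (by omega) (Prod.ext (by omega) (by omega)))
        rw [ih w' this]
      · -- false, true : stepR q = stepL q'
        exfalso
        rw [M_cons_false, M_cons_true] at hw
        have h1 : (1:ℕ) ≤ (M w).1 := hPw.1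
        have h1' : (1:ℕ) ≤ (M w').1 := hPw'.1
        have e1 := congrArg (fun q : Q => q.1) hw
        have e2 := congrArg (fun q : Q => q.2.1) hw
        simp [stepR, stepL] at e1 e2
        omega
      · exfalso
        rw [M_cons_true, M_cons_false] at hw
        have h1 : (1:ℕ) ≤ (M w').1 := hPw'.1
        have h1' : (1:ℕ) ≤ (M w).1 := hPw.1
        have e1 := congrArg (fun q : Q => q.1) hw
        have e2 := congrArg (fun q : Q => q.2.1) hw
        simp [stepR, stepL] at e1 e2
        omega
      · rw [M_cons_true, M_cons_true] at hw
        have : M w = M w' := by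
          have e1 := congrArg (fun q : Q => q.1) hw
          have e2 := congrArg (fun q : Q => q.2.1) hw
          have e3 := congrArg (fun q : Q => q.2.2.1) hw
          have e4 := congrArg (fun q : Q => q.2.2.2) hw
          simp [stepL] at e1 e2 e3 e4
          exact Prod.ext (by omega) (Prod.ext (by omega) (Prod.ext (by omega) (by omega)))
        rw [ih w' this]

lemma M_surj_aux : ∀ n : ℕ, ∀ q : Q, P q → q.2.1 + q.2.2.1 = n → ∃ w, M w = q := by
  intro n
  induction n using Nat.strong_induction_on with
  | _ n ih =>
    rintro ⟨a, b, c, d⟩ ⟨h1, h2⟩ hn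
    simp only at h1 h2 hn
    have hd : 1 ≤ d := by
      rcases Nat.eq_zero_or_pos d with h | h
      · subst h; simp at h2
      · exact h
    by_cases hbc : b = 0 ∧ c = 0
    · obtain ⟨hb, hc⟩ := hbc
      subst hb; subst hc
      simp at h2
      refine ⟨[], ?_⟩
      simp [M]
      exact ⟨h2.1.symm, h2.2.symm⟩
    by_cases hba : b < a
    · -- L case : c ≥ d
      have hcd : d ≤ c := by
        by_contra hcd
        push_neg at hcd
        have key : (b + 1) * (c + 1) ≤ a * d :=
          Nat.mul_le_mul (by omega) (by omega)
        have exp : (b + 1) * (c + 1) = b * c + (b + c + 1) := by ring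
        rw [exp, h2] at key
        have := Nat.le_of_add_le_add_left key
        omega
      have hP' : P (a - b, b, c - d, d) := by
        refine ⟨by omega, ?_⟩
        show (a - b) * d = b * (c - d) + 1
        zify [hcd, le_of_lt hba]
        have h2' : (a : ℤ) * d = b * c + 1 := by exact_mod_cast h2
        linear_combination h2'
      have hc1 : 1 ≤ c := le_trans hd hcd
      obtain ⟨w, hw⟩ := ih (b + (c - d)) (by omega) (a - b, b, c - d, d) hP' rfl
      refine ⟨true :: w, ?_⟩
      rw [M_cons_true, hw]
      simp [stepL, Prod.ext_iff]
      omega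
    · -- R case : a ≤ b, d ≥ c
      push_neg at hba
      have hb1 : 1 ≤ b := le_trans h1 hba
      have hdc : c ≤ d := by
        by_contra hdc
        push_neg at hdc
        have key : a * (d + 1) ≤ b * c := Nat.mul_le_mul hba (by omega)
        have exp : a * (d + 1) = a * d + a := by ring
        rw [exp, h2] at key
        omega
      have hP' : P (a, b - a, c, d - c) := by
        refine ⟨h1, ?_⟩
        show a * (d - c) = (b - a) * c + 1
        zify [hdc, hba]
        have h2' : (a : ℤ) * d = b * c + 1 := by exact_mod_cast h2
        linear_combination h2'
      obtain ⟨w, hw⟩ := ih ((b - a) + c) (by omega) (a, b - a, c, d - c) hP' rfl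
      refine ⟨false :: w, ?_⟩
      rw [M_cons_false, hw]
      simp [stepR, Prod.ext_iff]
      omega

noncomputable def e : List Bool ≃ {x : Q // P x} :=
  Equiv.ofBijective (fun w => ⟨M w, P_M w⟩)
    ⟨fun w w' h => M_inj w w' (congrArg Subtype.val h),
     fun q => (M_surj_aux (q.val.2.1 + q.val.2.2.1) q.val q.2 rfl).imp
       fun w hw => Subtype.ext hw⟩


lemma f_nonneg (w : List Bool) : 0 ≤ f (M w) := by unfold f; positivity

lemma partial_le (A : Finset (List Bool)) : ∑ w ∈ A, f (M w) ≤ 1 / 48 := by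
  set n := A.sup List.length + 1 with hn
  have hA : A ⊆ T n := fun w hw => mem_T.mpr (Nat.lt_succ_of_le (Finset.le_sup hw))
  calc ∑ w ∈ A, f (M w) ≤ ∑ w ∈ T n, f (M w) :=
      Finset.sum_le_sum_of_subset_of_nonneg hA (fun w _ _ => f_nonneg w)
    _ = 1 / 48 - (1 / 48) * ∑ w ∈ S n, g (M w) := telescope n
    _ ≤ 1 / 48 := by have := gsum_nonneg n; linarith

lemma summable_f : Summable (fun w : List Bool => f (M w)) :=
  summable_of_sum_le (fun w => f_nonneg w) partial_le

open Filter Topology in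
lemma hasSum_f : HasSum (fun w : List Bool => f (M w)) (1 / 48) := by
  have hs := summable_f
  have htsum_le : ∑' w : List Bool, f (M w) ≤ 1 / 48 := Summable.tsum_le_of_sum_le hs partial_le
  have hge : (1 : ℝ) / 48 ≤ ∑' w : List Bool, f (M w) := by
    have h0 : Tendsto (fun n : ℕ => 1 / ((n : ℝ) + 1)) atTop (nhds 0) :=
      tendsto_one_div_add_atTop_nhds_zero_nat
    have h1 : Tendsto (fun n : ℕ => 1 / ((n : ℝ) + 1) ^ 2) atTop (nhds 0) := by
      have := h0.pow 2
      simpa [div_pow] using this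
    have hlimit : Tendsto (fun n : ℕ => 1 / 48 - (1 / 48) * (1 / ((n : ℝ) + 1) ^ 2)) atTop
        (nhds (1 / 48)) := by
      have := (tendsto_const_nhds (x := (1 : ℝ) / 48) (f := atTop)).sub (h1.const_mul (1 / 48))
      simpa using this
    apply le_of_tendsto hlimit
    filter_upwards with n
    calc 1 / 48 - (1 / 48) * (1 / ((n : ℝ) + 1) ^ 2)
        ≤ 1 / 48 - (1 / 48) * ∑ w ∈ S n, g (M w) := by
          have := gsum_le n; linarith
      _ = ∑ w ∈ T n, f (M w) := (telescope n).symm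
      _ ≤ ∑' w : List Bool, f (M w) := Summable.sum_le_tsum _ (fun w _ => f_nonneg w) hs
  have heq : ∑' w : List Bool, f (M w) = 1 / 48 := le_antisymm htsum_le hge
  exact heq ▸ hs.hasSum

end SBP

theorem sum_parabola_sq :
    HasSum (fun x : {x : ℕ × ℕ × ℕ × ℕ //
        1 ≤ x.1 ∧ x.1 * x.2.2.2 = x.2.1 * x.2.2.1 + 1} =>
      1 / (16 * ((x.val.1 : ℝ) + x.val.2.2.1) ^ 2 * ((x.val.2.1 : ℝ) + x.val.2.2.2) ^ 2 *
        ((x.val.1 : ℝ) + x.val.2.1 + x.val.2.2.1 + x.val.2.2.2) ^ 2)) (1 / 48) := by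
  refine (Equiv.hasSum_iff SBP.e).mp ?_
  have : (fun x : {x : ℕ × ℕ × ℕ × ℕ //
        1 ≤ x.1 ∧ x.1 * x.2.2.2 = x.2.1 * x.2.2.1 + 1} =>
      1 / (16 * ((x.val.1 : ℝ) + x.val.2.2.1) ^ 2 * ((x.val.2.1 : ℝ) + x.val.2.2.2) ^ 2 *
        ((x.val.1 : ℝ) + x.val.2.1 + x.val.2.2.1 + x.val.2.2.2) ^ 2)) ∘ SBP.e
      = fun w : List Bool => SBP.f (SBP.M w) := by
    funext w
    show (1:ℝ) / (16 * (((SBP.M w).1 : ℝ) + (SBP.M w).2.2.1) ^ 2 * (((SBP.M w).2.1 : ℝ) + (SBP.M w).2.2.2) ^ 2 *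
        (((SBP.M w).1 : ℝ) + (SBP.M w).2.1 + (SBP.M w).2.2.1 + (SBP.M w).2.2.2) ^ 2) = _
    simp only [Function.comp_apply, SBP.e, Equiv.ofBijective_apply, SBP.f, SBP.uu, SBP.vv]
    push_cast
    ring_nf
  exact (congrArg (fun F => HasSum F (1/48 : ℝ)) this).mpr SBP.hasSum_f
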